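/- arXiv:1007.0113 — 4 statements merged into one kernel-verified Lean document; each statement's English description precedes it below -/
import Mathlib

section
/- If (H, i) is a Kolmogorov decomposition of a positive definite kernel k : S × S → ℂ with i(S) total in H, and (G, j) is any other pair satisfying ⟨j(σ), j(σ')⟩ = k(σ,σ') for all σ,σ', then there exists a unique bounded linear isometry v : H → G with v(i(σ)) = j(σ) for all σ ∈ S. -/
open scoped ComplexOrder

/-- A kernel `k : S × S → ℂ` is positive definite if all finite quadratic forms
`∑ᵢⱼ z̄ᵢ k(σᵢ,σⱼ) zⱼ` are nonnegative. -/
def IsPosDefKernel {S : Type*} (k : S → S → ℂ) : Prop :=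
  ∀ (n : ℕ) (σ : Fin n → S) (z : Fin n → ℂ),
    0 ≤ ∑ i, ∑ j, (starRingEnd ℂ) (z i) * k (σ i) (σ j) * z j

/-- Universal property of the minimal Kolmogorov decomposition: if `(H, i)` is a
Kolmogorov decomposition of `k` with `i(S)` total in `H`, and `(G, j)` is any other
pair reproducing `k`, then there is a unique bounded linear isometry `v : H → G`
with `v (i σ) = j σ` for all `σ`. -/
theorem kolmogorov_universal_property {S : Type*} (k : S → S → ℂ)
    (hk : IsPosDefKernel k)
    {H : Type*} [NormedAddCommGroup H] [InnerProductSpace ℂ H] [CompleteSpace H]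
    {G : Type*} [NormedAddCommGroup G] [InnerProductSpace ℂ G] [CompleteSpace G]
    (i : S → H) (j : S → G)
    (hi : ∀ σ σ' : S, (inner ℂ (i σ) (i σ') : ℂ) = k σ σ')
    (htotal : Dense ((Submodule.span ℂ (Set.range i) : Submodule ℂ H) : Set H))
    (hj : ∀ σ σ' : S, (inner ℂ (j σ) (j σ') : ℂ) = k σ σ') :
    ∃! v : H →L[ℂ] G, (∀ x : H, ‖v x‖ = ‖x‖) ∧ ∀ σ : S, v (i σ) = j σ := by
  classical
  set T : (S →₀ ℂ) →ₗ[ℂ] H := Finsupp.linearCombination ℂ i with hT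
  set φ : (S →₀ ℂ) →ₗ[ℂ] G := Finsupp.linearCombination ℂ j with hφ
  -- inner products agree
  have key : ∀ f g : S →₀ ℂ, (inner ℂ (T f) (T g) : ℂ) = inner ℂ (φ f) (φ g) := by
    intro f g
    rw [hT, hφ]
    simp only [Finsupp.linearCombination_apply, Finsupp.sum]
    rw [sum_inner, sum_inner]
    refine Finset.sum_congr rfl fun a _ => ?_
    rw [inner_sum, inner_sum]
    refine Finset.sum_congr rfl fun b _ => ?_
    rw [inner_smul_left, inner_smul_left, inner_smul_right, inner_smul_right, hi, hj]
  have keynorm : ∀ f : S →₀ ℂ, ‖T f‖ = ‖φ f‖ := by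
    intro f
    have h1 : (‖T f‖ : ℝ) ^ 2 = ‖φ f‖ ^ 2 := by
      have := key f f
      rw [@inner_self_eq_norm_sq_to_K ℂ, @inner_self_eq_norm_sq_to_K ℂ] at this
      exact_mod_cast this
    nlinarith [norm_nonneg (T f), norm_nonneg (φ f)]
  have hker : LinearMap.ker T ≤ LinearMap.ker φ := by
    intro f hf
    simp only [LinearMap.mem_ker] at hf ⊢
    rw [← norm_eq_zero, ← keynorm, hf, norm_zero]
  set N : Submodule ℂ H := LinearMap.range T with hN
  have hNspan : N = Submodule.span ℂ (Set.range i) := by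
    rw [hN, hT, Finsupp.range_linearCombination]
  -- map on N
  set u0 : N →ₗ[ℂ] G := ((LinearMap.ker T).liftQ φ hker) ∘ₗ
    (T.quotKerEquivRange.symm : N →ₗ[ℂ] _) with hu0
  have hu0T : ∀ f : S →₀ ℂ, ∀ h, u0 ⟨T f, h⟩ = φ f := by
    intro f h
    rw [hu0]
    simp only [LinearMap.coe_comp, Function.comp_apply, LinearEquiv.coe_coe]
    rw [T.quotKerEquivRange_symm_apply_image f h]
    rfl
  have hu0norm : ∀ x : N, ‖u0 x‖ = ‖x‖ := by
    rintro ⟨x, hx⟩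
    obtain ⟨f, rfl⟩ := hx
    rw [hu0T f ⟨f, rfl⟩, ← keynorm]
    rfl
  -- continuous version
  set u : N →L[ℂ] G := LinearMap.mkContinuous u0 1 (fun x => by rw [hu0norm]; simp) with hu
  have hunorm : ∀ x : N, ‖u x‖ = ‖x‖ := hu0norm
  set e : N →L[ℂ] H := N.subtypeL with he
  have hdense : DenseRange e := by
    rw [he]
    have : Set.range (N.subtypeL) = (N : Set H) := Subtype.range_coe
    rw [DenseRange, this, hNspan]
    exact htotal
  have hue : IsUniformInducing e := by
    rw [he]
    exact (N.subtypeₗᵢ.isometry).isUniformInducing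
  set v : H →L[ℂ] G := u.extend e with hv
  have hve : ∀ x : N, v (x : H) = u x := fun x => ContinuousLinearMap.extend_eq u hdense hue x
  have hmem : ∀ σ : S, i σ ∈ N := by
    intro σ
    exact ⟨Finsupp.single σ 1, by simp [hT]⟩
  have hvj : ∀ σ : S, v (i σ) = j σ := by
    intro σ
    have h1 : v (i σ) = u ⟨i σ, hmem σ⟩ := hve ⟨i σ, hmem σ⟩
    have h2 : (⟨i σ, hmem σ⟩ : N) = ⟨T (Finsupp.single σ 1), ⟨_, rfl⟩⟩ := by
      ext; simp [hT]
    rw [h1, h2]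
    show u0 _ = _
    refine (hu0T (Finsupp.single σ 1) _).trans ?_
    simp [hφ]
  have hNdense : Dense (N : Set H) := by rw [hNspan]; exact htotal
  have hviso : ∀ x : H, ‖v x‖ = ‖x‖ := by
    have : (fun x : H => ‖v x‖) = fun x => ‖x‖ := by
      refine Continuous.ext_on hNdense (v.continuous.norm) continuous_norm ?_
      rintro x hx
      have := hve ⟨x, hx⟩
      simp only
      rw [this, hunorm]
      rfl
    intro x
    exact congrFun this x
  refine ⟨v, ⟨hviso, hvj⟩, ?_⟩
  rintro w ⟨hwiso, hwj⟩
  have heq : Set.EqOn ⇑w ⇑v (Set.range i) := by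
    rintro x ⟨σ, rfl⟩
    rw [hwj σ, hvj σ]
  have heq2 : Set.EqOn ⇑w ⇑v ((Submodule.span ℂ (Set.range i) : Submodule ℂ H) : Set H) :=
    LinearMap.eqOn_span' heq
  ext x
  exact congrFun (Continuous.ext_on htotal w.continuous v.continuous heq2) x
end

section
/- The composition of CPD-kernels is CPD: if K is a CPD-kernel over S from A to B and L is a CPD-kernel over S from B to C, then the kernel (L∘K)^{σ,σ'} := L^{σ,σ'} ∘ K^{σ,σ'} is a CPD-kernel over S from A to C. -/
/-- A kernel `K : S × S → B(A,B)` is completely positive definite (CPD) if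
`∑ᵢⱼ bᵢ* K^{σᵢ,σⱼ}(aᵢ* aⱼ) bⱼ ≥ 0` for all finite choices. -/
def IsCPDKernel {S A B : Type*} [CStarAlgebra A] [NonUnitalCStarAlgebra B]
    [PartialOrder B] [StarOrderedRing B] (K : S → S → (A →L[ℂ] B)) : Prop :=
  ∀ (n : ℕ) (σ : Fin n → S) (a : Fin n → A) (b : Fin n → B),
    0 ≤ ∑ i, ∑ j, star (b i) * K (σ i) (σ j) (star (a i) * a j) * b j

open Finset

section Aux
variable {B : Type*} [CStarAlgebra B] [PartialOrder B] [StarOrderedRing B]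

def sing {n : ℕ} (i : Fin n) (β : B) : Fin n → B := fun k => if k = i then β else 0

lemma single_form {n : ℕ} (N : Fin n → Fin n → B) (i j : Fin n) (β γ : B) :
    ∑ k, ∑ l, star (sing i β k) * N k l * sing j γ l = star β * N i j * γ := by
  rw [Finset.sum_eq_single i]
  · rw [Finset.sum_eq_single j]
    · simp [sing]
    · intro l _ hl; simp [sing, hl]
    · simp
  · intro k _ hk; simp [sing, hk]
  · simp

lemma herm {n : ℕ} (N : Fin n → Fin n → B)
    (h : ∀ b : Fin n → B, 0 ≤ ∑ i, ∑ j, star (b i) * N i j * b j) (i j : Fin n) :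
    star (N i j) = N j i := by
  set T : (Fin n → B) → (Fin n → B) → B :=
    fun b c => ∑ i, ∑ j, star (b i) * N i j * c j with hT
  have hsa : ∀ b, star (T b b) = T b b := fun b => (IsSelfAdjoint.of_nonneg (h b))
  have hadd1 : ∀ b c d, T (b + c) d = T b d + T c d := by
    intro b c d
    simp only [hT, Pi.add_apply, star_add, add_mul, Finset.sum_add_distrib]
  have hadd2 : ∀ b c d, T b (c + d) = T b c + T b d := by
    intro b c d
    simp only [hT, Pi.add_apply, mul_add, Finset.sum_add_distrib]
  have hsm1 : ∀ (z : ℂ) b c, T (z • b) c = (starRingEnd ℂ z) • T b c := by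
    intro z b c
    simp only [hT, Pi.smul_apply, star_smul, smul_mul_assoc, ← Finset.smul_sum]
    rfl
  have hsm2 : ∀ (z : ℂ) b c, T b (z • c) = z • T b c := by
    intro z b c
    simp only [hT, Pi.smul_apply, mul_smul_comm, ← Finset.smul_sum]
  have key : ∀ b c, star (T b c) = T c b := by
    intro b c
    have hA : star (T b c) + star (T c b) = T b c + T c b := by
      have h0 := hsa (b + c)
      rw [hadd1, hadd2, hadd2, star_add, star_add, star_add, hsa b, hsa c,
        ← sub_eq_zero] at h0
      rw [← sub_eq_zero]
      abel_nf at h0 ⊢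
      exact h0
    have hB : Complex.I • star (T c b) - Complex.I • star (T b c)
        = Complex.I • T b c - Complex.I • T c b := by
      have h0 := hsa (b + Complex.I • c)
      rw [hadd1, hadd2, hadd2, star_add, star_add, star_add, hsa b,
        hsm1, hsm2, hsm1, hsm2] at h0
      simp only [star_smul, Complex.star_def, Complex.conj_I, neg_smul, smul_smul,
        Complex.I_mul_I, neg_neg, one_smul, neg_mul, mul_neg, star_neg, hsa c] at h0
      rw [← sub_eq_zero] at h0
      rw [← sub_eq_zero]
      abel_nf at h0 ⊢
      exact h0
    have hB' : star (T c b) - star (T b c) = T b c - T c b := by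
      have h2 := congrArg (fun t => (-Complex.I) • t) hB
      simpa [smul_sub, smul_smul, Complex.I_mul_I] using h2
    have h3 : star (T b c) + star (T b c) = T c b + T c b := by
      have h4 := congrArg₂ (· - ·) hA hB'
      rw [← sub_eq_zero] at h4 ⊢
      abel_nf at h4 ⊢
      exact h4
    calc star (T b c) = (2⁻¹:ℂ) • (star (T b c) + star (T b c)) := by
          rw [← two_smul ℂ, smul_smul]; norm_num
      _ = (2⁻¹:ℂ) • (T c b + T c b) := by rw [h3]
      _ = T c b := by rw [← two_smul ℂ, smul_smul]; norm_num
  have h1 : T (sing j (1:B)) (sing i 1) = N j i := by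
    rw [hT]; simpa using single_form N j i 1 1
  have h2 : T (sing i (1:B)) (sing j 1) = N i j := by
    rw [hT]; simpa using single_form N i j 1 1
  rw [← h2, key, h1]

lemma inv_facts (q : B) (ε : ℝ) (hε : 0 < ε) (hsa : IsSelfAdjoint q)
    (hq : algebraMap ℝ B ε ≤ q) :
    ∃ r w : B, star r = r ∧ star w = w ∧ r * r = w ∧ q * w = 1 ∧ w * q = 1 := by
  have hspec : ∀ t ∈ spectrum ℝ q, ε ≤ t := (algebraMap_le_iff_le_spectrum hsa).mp hq
  have hpos : ∀ t ∈ spectrum ℝ q, 0 < t := fun t ht => lt_of_lt_of_le hε (hspec t ht)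
  have hf : ContinuousOn (fun t : ℝ => (Real.sqrt t)⁻¹) (spectrum ℝ q) := by
    refine ContinuousOn.inv₀ (Real.continuous_sqrt.continuousOn) fun t ht => ?_
    exact (Real.sqrt_ne_zero'.mpr (hpos t ht))
  have hg : ContinuousOn (fun t : ℝ => t⁻¹) (spectrum ℝ q) := by
    refine ContinuousOn.inv₀ continuousOn_id fun t ht => (hpos t ht).ne'
  refine ⟨cfc (fun t : ℝ => (Real.sqrt t)⁻¹) q, cfc (fun t : ℝ => t⁻¹) q,
    ?_, ?_, ?_, ?_, ?_⟩
  · exact (cfc_predicate (fun t : ℝ => (Real.sqrt t)⁻¹) q).star_eq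
  · exact (cfc_predicate (fun t : ℝ => t⁻¹) q).star_eq
  · rw [← cfc_mul _ _ q hf hf]
    refine cfc_congr fun t ht => ?_
    rw [← mul_inv]
    rw [Real.mul_self_sqrt (hpos t ht).le]
  · nth_rewrite 1 [← cfc_id ℝ q hsa]
    rw [← cfc_mul _ _ q (continuousOn_id) hg]
    rw [← cfc_one (R := ℝ) q hsa]
    refine cfc_congr fun t ht => ?_
    exact mul_inv_cancel₀ (hpos t ht).ne'
  · nth_rewrite 2 [← cfc_id ℝ q hsa]
    rw [← cfc_mul _ _ q hg (continuousOn_id)]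
    rw [← cfc_one (R := ℝ) q hsa]
    refine cfc_congr fun t ht => ?_
    exact inv_mul_cancel₀ (hpos t ht).ne'

lemma schur_pos {n : ℕ} (P : Fin (n+1) → Fin (n+1) → B) (w : B)
    (hP : ∀ b : Fin (n+1) → B, 0 ≤ ∑ i, ∑ j, star (b i) * P i j * b j)
    (hPh : ∀ i j, star (P i j) = P j i)
    (hw : star w = w) (hwq : w * P 0 0 = 1)
    (b : Fin n → B) :
    0 ≤ ∑ i, ∑ j, star (b i) *
      (P i.succ j.succ - P i.succ 0 * w * P 0 j.succ) * b j := by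
  set u : B := ∑ j, P 0 j.succ * b j with hu
  have hstaru : star u = ∑ j, star (b j) * P j.succ 0 := by
    rw [hu, star_sum]
    refine Finset.sum_congr rfl fun j _ => ?_
    rw [star_mul, hPh]
  set b' : Fin (n+1) → B := Fin.cases (-(w * u)) b with hb'
  have hb'0 : b' 0 = -(w * u) := rfl
  have hb's : ∀ i : Fin n, b' i.succ = b i := fun i => by simp [hb']
  have hsb'0 : star (b' 0) = -(star u * w) := by
    rw [hb'0, star_neg, star_mul, hw]
  have p1 : star (b' 0) * P 0 0 * b' 0 = star u * (w * u) := by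
    rw [hsb'0, hb'0]
    simp only [neg_mul, mul_neg, neg_neg, mul_assoc]
    rw [← mul_assoc w (P 0 0), hwq, one_mul]
  have p2 : ∑ j, star (b' 0) * P 0 j.succ * b j = -(star u * (w * u)) := by
    calc ∑ j, star (b' 0) * P 0 j.succ * b j
        = ∑ j, -(star u * (w * (P 0 j.succ * b j))) := by
          refine Finset.sum_congr rfl fun j _ => ?_
          rw [hsb'0]; simp only [neg_mul, mul_assoc]
      _ = -(star u * (w * u)) := by
          rw [Finset.sum_neg_distrib, ← Finset.mul_sum, ← Finset.mul_sum, hu]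
  have p3 : ∑ i, star (b i) * P i.succ 0 * b' 0 = -(star u * (w * u)) := by
    calc ∑ i, star (b i) * P i.succ 0 * b' 0
        = (∑ i, star (b i) * P i.succ 0) * b' 0 := (Finset.sum_mul ..).symm
      _ = -(star u * (w * u)) := by
          rw [← hstaru, hb'0, mul_neg]
  have p4 : ∑ i, ∑ j, star (b i) * (P i.succ 0 * w * P 0 j.succ) * b j
      = star u * (w * u) := by
    calc ∑ i, ∑ j, star (b i) * (P i.succ 0 * w * P 0 j.succ) * b j
        = ∑ i, (star (b i) * P i.succ 0) * (w * u) := by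
          refine Finset.sum_congr rfl fun i _ => ?_
          rw [hu, Finset.mul_sum, Finset.mul_sum]
          refine Finset.sum_congr rfl fun j _ => ?_
          simp only [mul_assoc]
      _ = (∑ i, star (b i) * P i.succ 0) * (w * u) := (Finset.sum_mul ..).symm
      _ = star u * (w * u) := by rw [← hstaru]
  have key : ∑ i, ∑ j, star (b' i) * P i j * b' j
      = ∑ i, ∑ j, star (b i) *
        (P i.succ j.succ - P i.succ 0 * w * P 0 j.succ) * b j := by
    have expand : ∑ i, ∑ j, star (b' i) * P i j * b' j
        = star (b' 0) * P 0 0 * b' 0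
          + (∑ j, star (b' 0) * P 0 j.succ * b j)
          + ((∑ i, star (b i) * P i.succ 0 * b' 0)
          + ∑ i, ∑ j, star (b i) * P i.succ j.succ * b j) := by
      rw [Fin.sum_univ_succ]
      simp only [Fin.sum_univ_succ, hb's, Finset.sum_add_distrib]
    have expand2 : ∑ i, ∑ j, star (b i) *
        (P i.succ j.succ - P i.succ 0 * w * P 0 j.succ) * b j
        = (∑ i, ∑ j, star (b i) * P i.succ j.succ * b j)
          - ∑ i, ∑ j, star (b i) * (P i.succ 0 * w * P 0 j.succ) * b j := by
      simp only [mul_sub, sub_mul, Finset.sum_sub_distrib]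
    rw [expand, expand2, p1, p2, p3, p4]
    abel
  rw [← key]; exact hP b'

lemma decomp : ∀ (n : ℕ) (N : Fin n → Fin n → B),
    (∀ b : Fin n → B, 0 ≤ ∑ i, ∑ j, star (b i) * N i j * b j) →
    ∀ ε : ℝ, 0 < ε →
    ∃ (x : Fin n → Fin n → B) (d : Fin n → ℝ),
      (∀ i, d i ≤ ε) ∧
      ∀ i j, ∑ k, star (x k i) * x k j
        = N i j + if i = j then algebraMap ℝ B (d i) else 0 := by
  intro n
  induction n with
  | zero =>
    intro N h ε hε
    exact ⟨0, 0, fun i => i.elim0, fun i => i.elim0⟩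
  | succ n IH =>
    intro N h ε hε
    -- the shifted matrix P
    set P : Fin (n+1) → Fin (n+1) → B :=
      fun i j => N i j + if i = 0 ∧ j = 0 then algebraMap ℝ B ε else 0 with hPdef
    have hP00 : P 0 0 = N 0 0 + algebraMap ℝ B ε := by simp [hPdef]
    have hPs0 : ∀ i : Fin n, P i.succ 0 = N i.succ 0 := by
      intro i; simp [hPdef, Fin.succ_ne_zero]
    have hP0s : ∀ j : Fin n, P 0 j.succ = N 0 j.succ := by
      intro j; simp [hPdef, Fin.succ_ne_zero]
    have hPss : ∀ i j : Fin n, P i.succ j.succ = N i.succ j.succ := by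
      intro i j; simp [hPdef, Fin.succ_ne_zero]
    have hNh := herm N h
    have halg : star (algebraMap ℝ B ε) = algebraMap ℝ B ε := by
      rw [← algebraMap_star_comm, star_trivial]
    have hPh : ∀ i j, star (P i j) = P j i := by
      intro i j
      simp only [hPdef, star_add]
      rw [hNh]
      congr 1
      by_cases h1 : i = 0 <;> by_cases h2 : j = 0 <;>
        simp [h1, h2, halg, and_comm]
    have hN00 : (0 : B) ≤ N 0 0 := by
      have := h (sing 0 1)
      rwa [single_form N 0 0 1 1, star_one, one_mul, mul_one] at this
    have hq : algebraMap ℝ B ε ≤ P 0 0 := by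
      rw [hP00]; exact le_add_of_nonneg_left hN00
    have hqsa : IsSelfAdjoint (P 0 0) := hPh 0 0
    obtain ⟨r, w, hr, hw, hrr, hqw, hwq⟩ := inv_facts (P 0 0) ε hε hqsa hq
    -- P is weakly positive
    have hP : ∀ b : Fin (n+1) → B, 0 ≤ ∑ i, ∑ j, star (b i) * P i j * b j := by
      intro b
      have expand : ∑ i, ∑ j, star (b i) * P i j * b j
          = (∑ i, ∑ j, star (b i) * N i j * b j)
            + star (b 0) * algebraMap ℝ B ε * b 0 := by
        simp only [hPdef, mul_add, add_mul, Finset.sum_add_distrib]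
        congr 1
        rw [Finset.sum_eq_single 0]
        · rw [Finset.sum_eq_single 0]
          · simp
          · intro l _ hl; simp [hl]
          · simp
        · intro k _ hk; simp [hk]
        · simp
      rw [expand]
      refine add_nonneg (h b) ?_
      rw [Algebra.algebraMap_eq_smul_one, mul_smul_comm, smul_mul_assoc, mul_one]
      exact smul_nonneg hε.le (star_mul_self_nonneg (b 0))
    -- Schur complement
    set Q : Fin n → Fin n → B :=
      fun i j => P i.succ j.succ - P i.succ 0 * w * P 0 j.succ with hQdef
    have hQ : ∀ b : Fin n → B, 0 ≤ ∑ i, ∑ j, star (b i) * Q i j * b j :=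
      fun b => schur_pos P w hP hPh hw hwq b
    obtain ⟨z, d', hd', hz⟩ := IH Q hQ ε hε
    refine ⟨Fin.cases (fun j => r * P 0 j) (fun k => Fin.cases 0 (z k)),
      Fin.cases ε d', ?_, ?_⟩
    · intro i
      refine Fin.cases ?_ ?_ i
      · simp
      · intro i'; simpa using hd' i'
    · intro i j
      have hsum : ∀ i j : Fin (n+1),
          ∑ k, star ((Fin.cases (fun j => r * P 0 j)
              (fun k => Fin.cases 0 (z k)) : Fin (n+1) → Fin (n+1) → B) k i)
            * (Fin.cases (fun j => r * P 0 j) (fun k => Fin.cases 0 (z k))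
              : Fin (n+1) → Fin (n+1) → B) k j
          = star (r * P 0 i) * (r * P 0 j)
            + ∑ k : Fin n, star ((Fin.cases 0 (z k) : Fin (n+1) → B) i)
              * (Fin.cases 0 (z k) : Fin (n+1) → B) j := by
        intro i j
        rw [Fin.sum_univ_succ]
        simp only [Fin.cases_zero, Fin.cases_succ]
      rw [hsum]
      have hstar0 : ∀ i : Fin (n+1), star (r * P 0 i) = P i 0 * r := by
        intro i; rw [star_mul, hr, hPh]
      rcases Fin.eq_zero_or_eq_succ i with rfl | ⟨i', rfl⟩ <;>
        rcases Fin.eq_zero_or_eq_succ j with rfl | ⟨j', rfl⟩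
      · -- (0,0)
        simp only [Fin.cases_zero, star_zero, zero_mul, Finset.sum_const_zero, add_zero]
        rw [hstar0]
        simp only [if_true]
        rw [← hP00]
        calc P 0 0 * r * (r * P 0 0) = P 0 0 * (r * r) * P 0 0 := by
              simp only [mul_assoc]
          _ = P 0 0 := by rw [hrr, hqw, one_mul]
      · -- (0, succ)
        simp only [Fin.cases_zero, Fin.cases_succ, star_zero, zero_mul,
          Finset.sum_const_zero, add_zero]
        rw [hstar0]
        rw [if_neg (by simp [(Fin.succ_ne_zero j').symm])]
        calc P 0 0 * r * (r * P 0 j'.succ) = P 0 0 * w * P 0 j'.succ := by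
              simp only [mul_assoc]; rw [← mul_assoc r r, hrr]
          _ = N 0 j'.succ + 0 := by rw [hqw, one_mul, hP0s, add_zero]
      · -- (succ, 0)
        simp only [Fin.cases_zero, Fin.cases_succ, mul_zero, star_zero,
          Finset.sum_const_zero, add_zero]
        rw [hstar0]
        rw [if_neg (Fin.succ_ne_zero i')]
        calc P i'.succ 0 * r * (r * P 0 0) = P i'.succ 0 * (w * P 0 0) := by
              simp only [mul_assoc]; rw [← mul_assoc r r, hrr]
          _ = N i'.succ 0 + 0 := by rw [hwq, mul_one, hPs0, add_zero]
      · -- (succ, succ)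
        simp only [Fin.cases_succ]
        rw [hstar0, hz i' j']
        have : P i'.succ 0 * r * (r * P 0 j'.succ) = P i'.succ 0 * w * P 0 j'.succ := by
          simp only [mul_assoc]; rw [← mul_assoc r r, hrr]
        rw [this, hQdef]
        simp only [hPss]
        simp only [Fin.succ_inj]
        abel

end Aux

/-- The Schur composition of CPD-kernels is CPD: if `K` is a CPD-kernel over `S` from
`A` to `B` and `L` a CPD-kernel over `S` from `B` to `C`, then
`(L∘K)^{σ,σ'} = L^{σ,σ'} ∘ K^{σ,σ'}` is a CPD-kernel over `S` from `A` to `C`. -/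
theorem composition_of_CPD_kernels {S A B C : Type*}
    [CStarAlgebra A]
    [CStarAlgebra B] [PartialOrder B] [StarOrderedRing B]
    [NonUnitalCStarAlgebra C] [PartialOrder C] [StarOrderedRing C]
    (K : S → S → (A →L[ℂ] B)) (L : S → S → (B →L[ℂ] C))
    (hK : IsCPDKernel K) (hL : IsCPDKernel L) :
    IsCPDKernel (fun σ σ' => (L σ σ').comp (K σ σ')) := by
  intro n σ a c
  simp only [ContinuousLinearMap.comp_apply]
  set N : Fin n → Fin n → B := fun i j => K (σ i) (σ j) (star (a i) * a j) with hNdef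
  have hNpos : ∀ b : Fin n → B, 0 ≤ ∑ i, ∑ j, star (b i) * N i j * b j :=
    fun b => hK n σ a b
  set X : C := ∑ i, ∑ j, star (c i) * (L (σ i) (σ j)) (N i j) * c j with hX
  show 0 ≤ X
  have ht : ∀ i, 0 ≤ star (c i) * L (σ i) (σ i) 1 * c i := by
    intro i
    have := hL 1 (fun _ => σ i) (fun _ => 1) (fun _ => c i)
    simpa using this
  set T : C := ∑ i, star (c i) * L (σ i) (σ i) 1 * c i with hT
  have hTpos : (0:C) ≤ T := Finset.sum_nonneg fun i _ => ht i
  have hkey : ∀ ε : ℝ, 0 < ε → 0 ≤ X + ε • T := by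
    intro ε hε
    obtain ⟨x, d, hd, hx⟩ := decomp n N hNpos ε hε
    have h1 : (0:C) ≤ ∑ k, ∑ i, ∑ j,
        star (c i) * L (σ i) (σ j) (star (x k i) * x k j) * c j :=
      Finset.sum_nonneg fun k _ => hL n σ (x k) c
    have h2 : ∑ k, ∑ i, ∑ j, star (c i) * L (σ i) (σ j) (star (x k i) * x k j) * c j
        = X + ∑ i, (d i) • (star (c i) * L (σ i) (σ i) 1 * c i) := by
      rw [Finset.sum_comm]
      calc ∑ i, ∑ k, ∑ j, star (c i) * L (σ i) (σ j) (star (x k i) * x k j) * c j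
          = ∑ i, ∑ j, ∑ k, star (c i) * L (σ i) (σ j) (star (x k i) * x k j) * c j := by
            exact Finset.sum_congr rfl fun i _ => Finset.sum_comm
        _ = ∑ i, ∑ j, star (c i) * L (σ i) (σ j) (∑ k, star (x k i) * x k j) * c j := by
            refine Finset.sum_congr rfl fun i _ => Finset.sum_congr rfl fun j _ => ?_
            rw [map_sum, Finset.mul_sum, Finset.sum_mul]
        _ = ∑ i, ∑ j, star (c i) *
              L (σ i) (σ j) (N i j + if i = j then algebraMap ℝ B (d i) else 0) * c j := by
            simp only [hx]
        _ = X + ∑ i, (d i) • (star (c i) * L (σ i) (σ i) 1 * c i) := by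
            simp only [map_add, mul_add, add_mul, Finset.sum_add_distrib, hX]
            congr 1
            refine Finset.sum_congr rfl fun i _ => ?_
            rw [Finset.sum_eq_single i]
            · rw [if_pos rfl, Algebra.algebraMap_eq_smul_one,
                ContinuousLinearMap.map_smul_of_tower, mul_smul_comm, smul_mul_assoc]
            · intro j _ hj
              rw [if_neg fun hh => hj hh.symm, map_zero, mul_zero, zero_mul]
            · simp
    have h3 : ∑ i, (d i) • (star (c i) * L (σ i) (σ i) 1 * c i) ≤ ε • T := by
      rw [hT, Finset.smul_sum]
      exact Finset.sum_le_sum fun i _ =>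
        smul_le_smul_of_nonneg_right (hd i) (ht i)
    calc (0:C) ≤ X + ∑ i, (d i) • (star (c i) * L (σ i) (σ i) 1 * c i) := h2 ▸ h1
      _ ≤ X + ε • T := add_le_add (le_refl X) h3
  have hseq : Filter.Tendsto (fun m : ℕ => -((1/(m+1) : ℝ) • T))
      Filter.atTop (nhds 0) := by
    have h0 : Filter.Tendsto (fun m : ℕ => (1/(m+1) : ℝ)) Filter.atTop (nhds 0) :=
      tendsto_one_div_add_atTop_nhds_zero_nat
    have := (h0.smul_const T).neg
    simpa using this
  have hle : ∀ m : ℕ, -((1/(m+1):ℝ) • T) ≤ X := by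
    intro m
    have h4 := hkey (1/(m+1)) (by positivity)
    rw [← sub_nonneg, sub_neg_eq_add]
    exact h4
  exact le_of_tendsto hseq (Filter.Eventually.of_forall hle)
end

section
/- Schönberg correspondence (ℂ-valued, pointwise form): if l : S × S → ℂ is a hermitian conditionally positive definite kernel, then for every t ≥ 0 the kernel e_t(σ,σ') := exp(t·l(σ,σ')) is positive definite on S. -/
open scoped ComplexOrder

/-- A kernel is conditionally positive definite if the quadratic forms are
nonnegative whenever the coefficients sum to zero. -/
def IsCondPosDefKernel {S : Type*} (k : S → S → ℂ) : Prop :=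
  ∀ (n : ℕ) (σ : Fin n → S) (z : Fin n → ℂ), (∑ i, z i) = 0 →
    0 ≤ ∑ i, ∑ j, (starRingEnd ℂ) (z i) * k (σ i) (σ j) * z j

namespace SchoenbergAux

open Finset


/-- Gram-representable kernel on `Fin n`. -/
def IsGram {n : ℕ} (M : Fin n → Fin n → ℂ) : Prop :=
  ∃ (N : ℕ) (v : Fin n → Fin N → ℂ),
    ∀ i j, M i j = ∑ a, (starRingEnd ℂ) (v i a) * v j a

lemma gram_form_nonneg {n : ℕ} {M : Fin n → Fin n → ℂ} (hM : IsGram M) (z : Fin n → ℂ) :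
    0 ≤ ∑ i, ∑ j, (starRingEnd ℂ) (z i) * M i j * z j := by
  obtain ⟨N, v, hv⟩ := hM
  have key : ∑ a, (starRingEnd ℂ) (∑ i, v i a * z i) * (∑ j, v j a * z j)
      = ∑ i, ∑ j, (starRingEnd ℂ) (z i) * M i j * z j := by
    calc ∑ a, (starRingEnd ℂ) (∑ i, v i a * z i) * (∑ j, v j a * z j)
        = ∑ a, ∑ i, ∑ j, (starRingEnd ℂ) (z i) * ((starRingEnd ℂ) (v i a) * v j a) * z j := by
          refine Finset.sum_congr rfl fun a _ => ?_
          rw [map_sum, Finset.sum_mul_sum]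
          exact Finset.sum_congr rfl fun i _ => Finset.sum_congr rfl fun j _ => by
            rw [map_mul]; ring
      _ = ∑ i, ∑ j, ∑ a, (starRingEnd ℂ) (z i) * ((starRingEnd ℂ) (v i a) * v j a) * z j := by
          rw [Finset.sum_comm]
          exact Finset.sum_congr rfl fun i _ => Finset.sum_comm
      _ = ∑ i, ∑ j, (starRingEnd ℂ) (z i) * M i j * z j := by
          refine Finset.sum_congr rfl fun i _ => Finset.sum_congr rfl fun j _ => ?_
          rw [hv, Finset.mul_sum, Finset.sum_mul]
  rw [← key]
  refine Finset.sum_nonneg fun a _ => ?_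
  rw [starRingEnd_apply]
  exact star_mul_self_nonneg (∑ i, v i a * z i)

lemma isGram_of_forms {n : ℕ} (M : Fin n → Fin n → ℂ)
    (hherm : ∀ i j, M j i = (starRingEnd ℂ) (M i j))
    (hpos : ∀ z : Fin n → ℂ, 0 ≤ ∑ i, ∑ j, (starRingEnd ℂ) (z i) * M i j * z j) :
    IsGram M := by
  have hps : (Matrix.of M).PosSemidef := by
    refine Matrix.PosSemidef.of_dotProduct_mulVec_nonneg ?_ ?_
    · ext i j
      simp only [Matrix.conjTranspose_apply, Matrix.of_apply]
      rw [← starRingEnd_apply, ← hherm]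
    · intro x
      have := hpos x
      calc (0:ℂ) ≤ ∑ i, ∑ j, (starRingEnd ℂ) (x i) * M i j * x j := this
        _ = dotProduct (star x) (Matrix.mulVec (Matrix.of M) x) := by
            simp only [dotProduct, Matrix.mulVec, Pi.star_apply,
              Matrix.of_apply, Finset.mul_sum]
            exact Finset.sum_congr rfl fun i _ => Finset.sum_congr rfl fun j _ => by
              rw [starRingEnd_apply]; ring
  obtain ⟨B, hB⟩ : ∃ B : Matrix (Fin n) (Fin n) ℂ, Matrix.of M = Matrix.conjTranspose B * B := by
    open MatrixOrder in exact CStarAlgebra.nonneg_iff_eq_star_mul_self.mp hps.nonneg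
  refine ⟨n, fun i a => B a i, fun i j => ?_⟩
  have := congrFun (congrFun hB i) j
  simp only [Matrix.of_apply, Matrix.mul_apply, Matrix.conjTranspose_apply] at this ⊢
  rw [this]
  exact Finset.sum_congr rfl fun a _ => by rw [starRingEnd_apply]

lemma IsGram.mul {n : ℕ} {M M' : Fin n → Fin n → ℂ} (h : IsGram M) (h' : IsGram M') :
    IsGram (fun i j => M i j * M' i j) := by
  obtain ⟨N, v, hv⟩ := h
  obtain ⟨N', w, hw⟩ := h'
  refine ⟨N * N', fun i b => v i (finProdFinEquiv.symm b).1 * w i (finProdFinEquiv.symm b).2,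
    fun i j => ?_⟩
  dsimp only
  rw [hv, hw, Finset.sum_mul_sum]
  rw [Fintype.sum_equiv (finProdFinEquiv.symm : Fin (N * N') ≃ Fin N × Fin N') _
    (fun p : Fin N × Fin N' => (starRingEnd ℂ) (v i p.1 * w i p.2) * (v j p.1 * w j p.2))
    (fun a => rfl)]
  rw [Fintype.sum_prod_type]
  refine Finset.sum_congr rfl fun a _ => Finset.sum_congr rfl fun b _ => ?_
  rw [map_mul]
  ring

lemma IsGram.pow {n : ℕ} {M : Fin n → Fin n → ℂ} (h : IsGram M) (m : ℕ) :
    IsGram (fun i j => M i j ^ m) := by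
  induction m with
  | zero => exact ⟨1, fun _ _ => 1, fun i j => by simp⟩
  | succ m ih =>
      have := ih.mul h
      simpa [pow_succ] using this

lemma exp_gram_nonneg {n : ℕ} {G : Fin n → Fin n → ℂ} (hG : IsGram G) (w : Fin n → ℂ) :
    0 ≤ ∑ i, ∑ j, (starRingEnd ℂ) (w i) * Complex.exp (G i j) * w j := by
  have hsummable : ∀ i j, Summable
      (fun m : ℕ => (starRingEnd ℂ) (w i) * (G i j ^ m / (m.factorial)) * w j) := fun i j =>
    ((NormedSpace.expSeries_div_summable (G i j)).mul_left _).mul_right _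
  have hexp : ∀ i j, (starRingEnd ℂ) (w i) * Complex.exp (G i j) * w j
      = ∑' m : ℕ, (starRingEnd ℂ) (w i) * (G i j ^ m / (m.factorial)) * w j := by
    intro i j
    rw [Complex.exp_eq_exp_ℂ, NormedSpace.exp_eq_tsum_div, ← tsum_mul_left, ← tsum_mul_right]
  calc (0:ℂ) ≤ ∑' m : ℕ, ∑ i, ∑ j, (starRingEnd ℂ) (w i) * (G i j ^ m / (m.factorial)) * w j := by
        refine tsum_nonneg fun m => ?_
        have key : ∑ i, ∑ j, (starRingEnd ℂ) (w i) * (G i j ^ m / (m.factorial)) * w j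
            = ((((m.factorial) : ℝ))⁻¹ : ℂ) * ∑ i, ∑ j, (starRingEnd ℂ) (w i) * G i j ^ m * w j := by
          rw [Finset.mul_sum]
          refine Finset.sum_congr rfl fun i _ => ?_
          rw [Finset.mul_sum]
          refine Finset.sum_congr rfl fun j _ => ?_
          push_cast
          ring
        rw [key]
        refine mul_nonneg ?_ (gram_form_nonneg (hG.pow m) w)
        rw [← Complex.ofReal_inv]
        exact Complex.zero_le_real.mpr (inv_nonneg.mpr (Nat.cast_nonneg _))
    _ = ∑ i, ∑ j, (starRingEnd ℂ) (w i) * Complex.exp (G i j) * w j := by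
        rw [Summable.tsum_finsetSum fun i _ => summable_sum fun j _ => hsummable i j]
        exact Finset.sum_congr rfl fun i _ =>
          (Summable.tsum_finsetSum fun j _ => hsummable i j).trans
            (Finset.sum_congr rfl fun j _ => (hexp i j).symm)

lemma IsGram.const_mul {n : ℕ} {M : Fin n → Fin n → ℂ} (h : IsGram M) {t : ℝ} (ht : 0 ≤ t) :
    IsGram (fun i j => (t : ℂ) * M i j) := by
  obtain ⟨N, v, hv⟩ := h
  refine ⟨N, fun i a => (Real.sqrt t : ℂ) * v i a, fun i j => ?_⟩
  dsimp only
  rw [hv, Finset.mul_sum]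
  refine Finset.sum_congr rfl fun a _ => ?_
  rw [map_mul, Complex.conj_ofReal]
  have : ((Real.sqrt t : ℂ)) * (Real.sqrt t : ℂ) = (t : ℂ) := by
    rw [← Complex.ofReal_mul, Real.mul_self_sqrt ht]
  rw [← this]
  ring


lemma shifted_form_nonneg {S : Type*} {l : S → S → ℂ} (hcpd : IsCondPosDefKernel l)
    {n : ℕ} (σ : Fin n → S) (σ0 : S) (x : Fin n → ℂ) :
    0 ≤ ∑ i, ∑ j, (starRingEnd ℂ) (x i) *
      (l (σ i) (σ j) - l (σ i) σ0 - l σ0 (σ j) + l σ0 σ0) * x j := by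
  have h0 := hcpd (n+1) (Fin.snoc σ σ0) (Fin.snoc x (-(∑ i, x i))) (by
    rw [Fin.sum_univ_castSucc]; simp)
  refine le_of_le_of_eq h0 ?_
  simp only [Fin.sum_univ_castSucc, Fin.snoc_castSucc, Fin.snoc_last]
  have hB : ∀ i : Fin n, (starRingEnd ℂ) (x i) * l (σ i) σ0 * -∑ k, x k
      = ∑ j, -((starRingEnd ℂ) (x i) * l (σ i) σ0 * x j) := by
    intro i
    rw [mul_neg, Finset.mul_sum, ← Finset.sum_neg_distrib]
  have hC : ∀ j : Fin n, (starRingEnd ℂ) (-∑ k, x k) * l σ0 (σ j) * x j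
      = ∑ i, -((starRingEnd ℂ) (x i) * l σ0 (σ j) * x j) := by
    intro j
    rw [map_neg, map_sum, neg_mul, neg_mul, Finset.sum_mul, Finset.sum_mul,
      ← Finset.sum_neg_distrib]
  have hD : (starRingEnd ℂ) (-∑ k, x k) * l σ0 σ0 * -∑ k, x k
      = ∑ i, ∑ j, (starRingEnd ℂ) (x i) * l σ0 σ0 * x j := by
    simp only [map_neg, map_sum, neg_mul, mul_neg, neg_neg]
    rw [Finset.sum_mul, Finset.sum_mul_sum]
  simp only [hB, hC, hD]
  simp only [Finset.sum_add_distrib]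
  rw [show (∑ j : Fin n, ∑ i : Fin n, -((starRingEnd ℂ) (x i) * l σ0 (σ j) * x j))
      = ∑ i : Fin n, ∑ j : Fin n, -((starRingEnd ℂ) (x i) * l σ0 (σ j) * x j) from
    Finset.sum_comm]
  have hR : ∀ (i j : Fin n), (starRingEnd ℂ) (x i) *
        (l (σ i) (σ j) - l (σ i) σ0 - l σ0 (σ j) + l σ0 σ0) * x j
      = (starRingEnd ℂ) (x i) * l (σ i) (σ j) * x j
        + -((starRingEnd ℂ) (x i) * l (σ i) σ0 * x j)
        + -((starRingEnd ℂ) (x i) * l σ0 (σ j) * x j)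
        + (starRingEnd ℂ) (x i) * l σ0 σ0 * x j := by
    intro i j; ring
  simp only [hR, Finset.sum_add_distrib]
  ring

end SchoenbergAux

open SchoenbergAux in
/-- Schönberg correspondence (pointwise form): if `l` is a hermitian conditionally
positive definite kernel, then `exp(t·l)` is positive definite for every `t ≥ 0`. -/
theorem schoenberg_correspondence {S : Type*} (l : S → S → ℂ)
    (hherm : ∀ σ σ' : S, l σ' σ = (starRingEnd ℂ) (l σ σ'))
    (hcpd : IsCondPosDefKernel l) :
    ∀ t : ℝ, 0 ≤ t →
      IsPosDefKernel (fun σ σ' => Complex.exp ((t : ℂ) * l σ σ')) := by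
  intro t ht n σ z
  rcases Nat.eq_zero_or_pos n with hn | hn
  · subst hn; simp
  set σ0 := σ ⟨0, hn⟩ with hσ0
  set K : Fin n → Fin n → ℂ :=
    fun i j => l (σ i) (σ j) - l (σ i) σ0 - l σ0 (σ j) + l σ0 σ0 with hK
  have hKherm : ∀ i j, K j i = (starRingEnd ℂ) (K i j) := by
    intro i j
    simp only [hK, map_add, map_sub, ← hherm]
    ring
  have hGram : IsGram K :=
    isGram_of_forms K hKherm (fun x => shifted_form_nonneg hcpd σ σ0 x)
  have hGt : IsGram (fun i j => (t : ℂ) * K i j) := hGram.const_mul ht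
  set a : Fin n → ℂ :=
    fun i => Complex.exp ((t : ℂ) * l (σ i) σ0 - (t : ℂ) * l σ0 σ0 / 2) with ha
  have hpoint : ∀ i j, Complex.exp ((t : ℂ) * l (σ i) (σ j))
      = a i * Complex.exp ((t : ℂ) * K i j) * (starRingEnd ℂ) (a j) := by
    intro i j
    rw [ha]
    dsimp only
    rw [← Complex.exp_conj, ← Complex.exp_add, ← Complex.exp_add]
    congr 1
    simp only [map_sub, map_mul, map_div₀, Complex.conj_ofReal, map_ofNat, ← hherm, hK]
    ring
  have hw : ∀ i j, (starRingEnd ℂ) (z i) * Complex.exp ((t : ℂ) * l (σ i) (σ j)) * z j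
      = (starRingEnd ℂ) (z i * (starRingEnd ℂ) (a i)) * Complex.exp ((t : ℂ) * K i j)
        * (z j * (starRingEnd ℂ) (a j)) := by
    intro i j
    rw [hpoint i j, map_mul, Complex.conj_conj]
    ring
  calc (0 : ℂ)
      ≤ ∑ i, ∑ j, (starRingEnd ℂ) (z i * (starRingEnd ℂ) (a i))
          * Complex.exp ((t : ℂ) * K i j) * (z j * (starRingEnd ℂ) (a j)) :=
        exp_gram_nonneg hGt (fun i => z i * (starRingEnd ℂ) (a i))
    _ = ∑ i, ∑ j, (starRingEnd ℂ) (z i)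
          * (fun σ σ' => Complex.exp ((t : ℂ) * l σ σ')) (σ i) (σ j) * z j := by
        exact (Finset.sum_congr rfl fun i _ => Finset.sum_congr rfl fun j _ =>
          (hw i j)).symm
end

section
/- Let T : E → F be a φ-map between Hilbert modules, where E is a Hilbert module over a unital C*-algebra B, F a Hilbert C-module, and φ : B → C a completely positive map, i.e., ⟨T(x), T(x')⟩ = φ(⟨x, x'⟩) for all x, x' ∈ E. Let (ℱ, ζ) be the GNS-construction of φ (a correspondence from B to C with cyclic vector ζ such that ⟨ζ, bζ⟩ = φ(b)). Then the map x ⊙ (bζc) ↦ T(xb)c extends to a well-defined isometry v : E ⊙ ℱ → F with v(x ⊙ ζ) = T(x) for all x ∈ E. -/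
/-- A Hilbert module over the C*-algebra `B`: a complex normed space `carrier` with a
right `B`-action `sm` and a `B`-valued inner product `ip`, positive, definite,
right-`B`-linear, complete in the norm `‖x‖ = √‖⟨x,x⟩‖`. -/
structure HilbertCStarModule (B : Type*) [NonUnitalCStarAlgebra B] [PartialOrder B]
    [StarOrderedRing B] where
  carrier : Type*
  [nacg : NormedAddCommGroup carrier]
  [mod : Module ℂ carrier]
  sm : carrier → B → carrier
  sm_add : ∀ x (b c : B), sm x (b + c) = sm x b + sm x c
  add_sm : ∀ x y (b : B), sm (x + y) b = sm x b + sm y b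
  sm_mul : ∀ x (b c : B), sm x (b * c) = sm (sm x b) c
  ip : carrier → carrier → B
  inner_add_right : ∀ x y z, ip x (y + z) = ip x y + ip x z
  inner_smul_right : ∀ x y (c : ℂ), ip x (c • y) = c • ip x y
  star_inner : ∀ x y, star (ip x y) = ip y x
  inner_sm_right : ∀ x y b, ip x (sm y b) = ip x y * b
  inner_nonneg : ∀ x, 0 ≤ ip x x
  inner_definite : ∀ x, ip x x = 0 → x = 0
  norm_eq : ∀ x, ‖x‖ = Real.sqrt ‖ip x x‖
  [complete : CompleteSpace carrier]

attribute [instance] HilbertCStarModule.nacg HilbertCStarModule.mod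
  HilbertCStarModule.complete

/-- A correspondence from `A` to `B`: a Hilbert `B`-module together with a
nondegenerate left action of `A` by adjointable operators. -/
structure Correspondence (A B : Type*) [NonUnitalCStarAlgebra A]
    [NonUnitalCStarAlgebra B] [PartialOrder B] [StarOrderedRing B]
    extends HilbertCStarModule B where
  la : A → carrier → carrier
  la_add : ∀ (a : A) x y, la a (x + y) = la a x + la a y
  add_la : ∀ (a b : A) x, la (a + b) x = la a x + la b x
  la_mul : ∀ (a b : A) x, la (a * b) x = la a (la b x)
  la_smul : ∀ (a : A) (c : ℂ) x, la a (c • x) = c • la a x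
  la_sm : ∀ (a : A) x (b : B), la a (sm x b) = sm (la a x) b
  la_star : ∀ (a : A) x y, ip x (la a y) = ip (la (star a) x) y
  nondeg : Dense ((Submodule.span ℂ
    {y : carrier | ∃ (a : A) (x : carrier), y = la a x} :
      Submodule ℂ carrier) : Set carrier)

/-- A linear map `φ : B → C` between C*-algebras is completely positive if
`∑ᵢⱼ cᵢ* φ(bᵢ* bⱼ) cⱼ ≥ 0` for all finite families. -/
def IsCompletelyPositive {B C : Type*} [CStarAlgebra B] [NonUnitalCStarAlgebra C]
    [PartialOrder C] [StarOrderedRing C] (φ : B →L[ℂ] C) : Prop :=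
  ∀ (n : ℕ) (b : Fin n → B) (c : Fin n → C),
    0 ≤ ∑ i, ∑ j, star (c i) * φ (star (b i) * b j) * c j

section Aux
open Filter Topology Set

variable {A : Type*} [NonUnitalCStarAlgebra A] [PartialOrder A] [StarOrderedRing A]

namespace HilbertCStarModule

variable (M : HilbertCStarModule A)

lemma ip_zero_right (x : M.carrier) : M.ip x 0 = 0 := by
  have h := M.inner_add_right x 0 0
  rw [add_zero] at h
  exact (left_eq_add.mp h)

lemma ip_zero_left (x : M.carrier) : M.ip 0 x = 0 := by
  rw [← M.star_inner, ip_zero_right, star_zero]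

lemma ip_add_left (x y z : M.carrier) : M.ip (x + y) z = M.ip x z + M.ip y z := by
  rw [← M.star_inner, M.inner_add_right, star_add, M.star_inner, M.star_inner]

lemma ip_smul_left (c : ℂ) (x y : M.carrier) : M.ip (c • x) y = star c • M.ip x y := by
  rw [← M.star_inner, M.inner_smul_right, star_smul, M.star_inner]

lemma ip_sub_right (x y z : M.carrier) : M.ip x (y - z) = M.ip x y - M.ip x z := by
  have h := M.inner_add_right x (y - z) z
  rw [sub_add_cancel] at h
  rw [eq_sub_of_add_eq h.symm]

lemma ip_sub_left (x y z : M.carrier) : M.ip (x - y) z = M.ip x z - M.ip y z := by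
  rw [← M.star_inner, ip_sub_right, star_sub, M.star_inner, M.star_inner]

lemma ip_sm_left (x y : M.carrier) (b : A) : M.ip (M.sm x b) y = star b * M.ip x y := by
  rw [← M.star_inner, M.inner_sm_right, star_mul, M.star_inner]

lemma ip_self_selfAdjoint (x : M.carrier) : IsSelfAdjoint (M.ip x x) := M.star_inner x x

lemma norm_sq (x : M.carrier) : ‖M.ip x x‖ = ‖x‖ ^ 2 := by
  rw [M.norm_eq, Real.sq_sqrt (norm_nonneg _)]

lemma cs (x y : M.carrier) : ‖M.ip x y‖ ≤ ‖x‖ * ‖y‖ := by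
  set a := M.ip x y with ha
  set b := M.ip x x with hb
  by_cases hb0 : ‖b‖ = 0
  · have hx : x = 0 := M.inner_definite x (norm_eq_zero.mp hb0)
    subst hx
    rw [ha, ip_zero_left, norm_zero]
    positivity
  · have hbpos : (0:ℝ) < ‖b‖ := lt_of_le_of_ne (norm_nonneg _) (Ne.symm hb0)
    set s : ℝ := ‖b‖⁻¹ with hs
    have hspos : 0 < s := inv_pos.mpr hbpos
    -- inner products of u := sm x a
    have huu : M.ip (M.sm x a) (M.sm x a) = star a * b * a := by
      rw [M.inner_sm_right, ip_sm_left, ← hb]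
    have hyu : M.ip y (M.sm x a) = star a * a := by
      rw [M.inner_sm_right, ← M.star_inner, ← ha]
    have huy : M.ip (M.sm x a) y = star a * a := by
      rw [← M.star_inner, hyu, star_mul, star_star]
    have hexp : M.ip (((s:ℂ)) • M.sm x a - y) (((s:ℂ)) • M.sm x a - y)
        = (s*s) • (star a * b * a) - ((2*s) • (star a * a) - M.ip y y) := by
      rw [ip_sub_left, ip_sub_right, ip_sub_right, ip_smul_left, M.inner_smul_right,
        M.inner_smul_right, ip_smul_left, huu, hyu, huy]
      have hstσ : star ((s:ℂ)) = ((s:ℂ)) := Complex.conj_ofReal s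
      have hσσ : ((s:ℂ)) * ((s:ℂ)) = ((s*s : ℝ) : ℂ) := by push_cast; ring
      rw [hstσ, smul_smul, hσσ]
      simp only [Complex.coe_smul]
      module
    have hkey : (0:A) ≤ (s*s) • (star a * b * a) - ((2*s) • (star a * a) - M.ip y y) := by
      rw [← hexp]; exact M.inner_nonneg _
    have hconj : star a * b * a ≤ ‖b‖ • (star a * a) :=
      CStarAlgebra.star_left_conjugate_le_norm_smul (ip_self_selfAdjoint M x)
    have hss : (0:ℝ) ≤ s * s := mul_nonneg hspos.le hspos.le
    have h2 : (s*s) • (star a * b * a) ≤ (s*s) • (‖b‖ • (star a * a)) :=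
      smul_le_smul_of_nonneg_left hconj hss
    have h3 : (s*s) • (‖b‖ • (star a * a)) = s • (star a * a) := by
      rw [smul_smul, hs]
      congr 1
      field_simp
    have h4 : (2*s) • (star a * a) - M.ip y y ≤ s • (star a * a) := by
      calc (2*s) • (star a * a) - M.ip y y ≤ (s*s) • (star a * b * a) := sub_nonneg.mp hkey
        _ ≤ s • (star a * a) := h2.trans_eq h3
    have h5 : s • (star a * a) ≤ M.ip y y := by
      have : (2*s) • (star a * a) = s • (star a * a) + s • (star a * a) := by
        rw [← add_smul]; ring_nf
      rw [this] at h4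
      have h4' := sub_le_iff_le_add.mp h4
      exact le_of_add_le_add_left h4'
    have hnn : (0:A) ≤ s • (star a * a) := by
      have h := star_mul_self_nonneg (((Real.sqrt s : ℝ) : ℂ) • a)
      rwa [star_smul, Complex.star_def, Complex.conj_ofReal, smul_mul_smul_comm,
        ← Complex.ofReal_mul, Real.mul_self_sqrt hspos.le, Complex.coe_smul] at h
    have h6 : ‖s • (star a * a)‖ ≤ ‖M.ip y y‖ :=
      CStarAlgebra.norm_le_norm_of_nonneg_of_le hnn h5
    have h7 : s * ‖a‖^2 ≤ ‖y‖^2 := by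
      rw [norm_smul, Real.norm_of_nonneg hspos.le, CStarRing.norm_star_mul_self,
        ← sq, norm_sq] at h6
      exact h6
    have h8 : ‖a‖^2 ≤ ‖x‖^2 * ‖y‖^2 := by
      have hbn : ‖b‖ = ‖x‖^2 := norm_sq M x
      rw [hs] at h7
      calc ‖a‖^2 = ‖b‖ * (‖b‖⁻¹ * ‖a‖^2) := by field_simp
        _ ≤ ‖b‖ * ‖y‖^2 := by
            exact mul_le_mul_of_nonneg_left h7 (norm_nonneg _)
        _ = ‖x‖^2 * ‖y‖^2 := by rw [hbn]
    calc ‖a‖ = Real.sqrt (‖a‖^2) := (Real.sqrt_sq (norm_nonneg _)).symm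
      _ ≤ Real.sqrt (‖x‖^2 * ‖y‖^2) := Real.sqrt_le_sqrt h8
      _ = ‖x‖ * ‖y‖ := by
          rw [← mul_pow, Real.sqrt_sq (by positivity)]

lemma cont_ip : Continuous (fun p : M.carrier × M.carrier => M.ip p.1 p.2) := by
  rw [continuous_iff_continuousAt]
  rintro ⟨x₀, y₀⟩
  rw [ContinuousAt, tendsto_iff_norm_sub_tendsto_zero]
  have hbound : ∀ p : M.carrier × M.carrier,
      ‖M.ip p.1 p.2 - M.ip x₀ y₀‖ ≤ ‖p.1 - x₀‖ * ‖p.2‖ + ‖x₀‖ * ‖p.2 - y₀‖ := by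
    intro p
    have hdecomp : M.ip p.1 p.2 - M.ip x₀ y₀ = M.ip (p.1 - x₀) p.2 + M.ip x₀ (p.2 - y₀) := by
      rw [ip_sub_left, ip_sub_right]; abel
    rw [hdecomp]
    exact (norm_add_le _ _).trans (add_le_add (cs M _ _) (cs M _ _))
  have hg : Tendsto (fun p : M.carrier × M.carrier =>
      ‖p.1 - x₀‖ * ‖p.2‖ + ‖x₀‖ * ‖p.2 - y₀‖) (𝓝 (x₀, y₀)) (𝓝 0) := by
    have hc : Continuous fun p : M.carrier × M.carrier =>
        ‖p.1 - x₀‖ * ‖p.2‖ + ‖x₀‖ * ‖p.2 - y₀‖ := by fun_prop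
    have h0 := hc.tendsto (x₀, y₀)
    simpa using h0
  exact squeeze_zero (fun p => norm_nonneg _) hbound hg

lemma eq_zero_of_forall_ip_eq_zero {S : Submodule ℂ M.carrier}
    (hS : Dense (S : Set M.carrier)) {w : M.carrier}
    (h : ∀ z ∈ S, M.ip z w = 0) : w = 0 := by
  have hcl : IsClosed {z : M.carrier | M.ip z w = 0} :=
    isClosed_eq ((cont_ip M).comp (continuous_id.prodMk continuous_const)) continuous_const
  have huniv : ∀ z : M.carrier, M.ip z w = 0 := by
    intro z
    have hsub : (S : Set M.carrier) ⊆ {z | M.ip z w = 0} := fun z hz => h z hz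
    have hcls := closure_minimal hsub hcl
    rw [hS.closure_eq] at hcls
    exact hcls (Set.mem_univ z)
  exact M.inner_definite w (huniv w)

lemma norm_smul' (c : ℂ) (x : M.carrier) : ‖c • x‖ = ‖c‖ * ‖x‖ := by
  rw [M.norm_eq, ip_smul_left, M.inner_smul_right, smul_smul, norm_smul, norm_mul, norm_star,
    Real.sqrt_mul (mul_self_nonneg _), Real.sqrt_mul_self (norm_nonneg _), ← M.norm_eq]

/-- The canonical `ℂ`-normed-space structure of a Hilbert C*-module. -/
noncomputable def toNormedSpace : NormedSpace ℂ M.carrier :=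
  { M.mod with norm_smul_le := fun c x => le_of_eq (M.norm_smul' c x) }

end HilbertCStarModule
end Aux
/-- If `T : E → F` is a `φ`-map for a completely positive map `φ : B → C` (that is,
`⟨T x, T x'⟩ = φ(⟨x,x'⟩)`), and `(ℱ, ζ)` is the GNS-construction of `φ`, then the map
`x ⊙ (bζc) ↦ T(xb)c` extends to a well-defined isometry `v : E ⊙ ℱ → F` with
`v (x ⊙ ζ) = T x`. Here the interior tensor product `E ⊙ ℱ` is presented by a
balanced map `t` with `⟨t x y, t x' y'⟩ = ⟨y, ⟨x,x'⟩ y'⟩` and total range. -/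
theorem phi_map_factorization {B C : Type*} [CStarAlgebra B] [PartialOrder B] [StarOrderedRing B]
    [NonUnitalCStarAlgebra C] [PartialOrder C] [StarOrderedRing C]
    (φ : B →L[ℂ] C) (hφ : IsCompletelyPositive φ)
    (E : HilbertCStarModule B) (F : HilbertCStarModule C)
    (T : E.carrier → F.carrier)
    (hTadd : ∀ x y : E.carrier, T (x + y) = T x + T y)
    (hTsmul : ∀ (c : ℂ) (x : E.carrier), T (c • x) = c • T x)
    (hT : ∀ x x' : E.carrier, F.ip (T x) (T x') = φ (E.ip x x'))
    -- the GNS-construction `(ℱ, ζ)` of `φ`: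
    (ℱ : Correspondence B C) (ζ : ℱ.carrier)
    (hζ : ∀ b : B, ℱ.ip ζ (ℱ.la b ζ) = φ b)
    (hcyclic : Dense ((Submodule.span ℂ
      {y : ℱ.carrier | ∃ (b : B) (c : C), y = ℱ.sm (ℱ.la b ζ) c} :
        Submodule ℂ ℱ.carrier) : Set ℱ.carrier))
    -- the interior tensor product `G = E ⊙ ℱ`, presented by the map `t`:
    (G : HilbertCStarModule C) (t : E.carrier → ℱ.carrier → G.carrier)
    (ht : ∀ (x x' : E.carrier) (y y' : ℱ.carrier),
      G.ip (t x y) (t x' y') = ℱ.ip y (ℱ.la (E.ip x x') y'))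
    (htadd₁ : ∀ (x x' : E.carrier) (y : ℱ.carrier), t (x + x') y = t x y + t x' y)
    (htadd₂ : ∀ (x : E.carrier) (y y' : ℱ.carrier), t x (y + y') = t x y + t x y')
    (htbal : ∀ (x : E.carrier) (b : B) (y : ℱ.carrier),
      t (E.sm x b) y = t x (ℱ.la b y))
    (httotal : Dense ((Submodule.span ℂ
      (Set.range fun p : E.carrier × ℱ.carrier => t p.1 p.2) :
        Submodule ℂ G.carrier) : Set G.carrier)) :
    ∃ v : G.carrier → F.carrier,
      (∀ p q : G.carrier, v (p + q) = v p + v q) ∧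
      (∀ p q : G.carrier, F.ip (v p) (v q) = G.ip p q) ∧
      (∀ (x : E.carrier) (b : B) (c : C),
        v (t x (ℱ.sm (ℱ.la b ζ) c)) = F.sm (T (E.sm x b)) c) ∧
      (∀ x : E.carrier, v (t x ζ) = T x) := by

  classical
  letI : NormedSpace ℂ ℱ.carrier := ℱ.toHilbertCStarModule.toNormedSpace
  letI : NormedSpace ℂ G.carrier := G.toNormedSpace
  letI : NormedSpace ℂ F.carrier := F.toNormedSpace
  open Filter Topology Set HilbertCStarModule in
  -- generators
  let g : (E.carrier × B × C) ⊕ E.carrier → G.carrier :=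
    Sum.elim (fun q => t q.1 (ℱ.sm (ℱ.la q.2.1 ζ) q.2.2)) (fun x => t x ζ)
  let f : (E.carrier × B × C) ⊕ E.carrier → F.carrier :=
    Sum.elim (fun q => F.sm (T (E.sm q.1 q.2.1)) q.2.2) (fun x => T x)
  have hEip : ∀ (x x' : E.carrier) (b b' : B),
      E.ip (E.sm x b) (E.sm x' b') = star b * E.ip x x' * b' := by
    intro x x' b b'
    rw [E.inner_sm_right, E.ip_sm_left]
  have hlaip : ∀ (b e : B), ℱ.ip (ℱ.la b ζ) (ℱ.la e ζ) = φ (star b * e) := by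
    intro b e
    calc ℱ.ip (ℱ.la b ζ) (ℱ.la e ζ)
        = ℱ.ip (ℱ.la (star (star b)) ζ) (ℱ.la e ζ) := by rw [star_star]
      _ = ℱ.ip ζ (ℱ.la (star b) (ℱ.la e ζ)) := (ℱ.la_star (star b) ζ (ℱ.la e ζ)).symm
      _ = ℱ.ip ζ (ℱ.la (star b * e) ζ) := by rw [ℱ.la_mul]
      _ = φ (star b * e) := hζ _
  have hgen : ∀ i j, F.ip (f i) (f j) = G.ip (g i) (g j) := by
    rintro (⟨x, b, c⟩ | x) (⟨x', b', c'⟩ | x') <;>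
      simp only [g, f, Sum.elim_inl, Sum.elim_inr]
    · rw [F.inner_sm_right, F.ip_sm_left, hT, hEip,
        ht, ℱ.la_sm, ℱ.inner_sm_right, ← ℱ.la_mul,
        ℱ.toHilbertCStarModule.ip_sm_left, hlaip,
        show star b * (E.ip x x' * b') = star b * E.ip x x' * b' from (mul_assoc _ _ _).symm]
    · rw [F.ip_sm_left, hT, E.ip_sm_left, ht, ℱ.toHilbertCStarModule.ip_sm_left, hlaip]
    · rw [F.inner_sm_right, hT, E.inner_sm_right, ht, ℱ.la_sm, ℱ.inner_sm_right, ← ℱ.la_mul, hζ]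
    · rw [hT, ht, hζ]
  let α : ((E.carrier × B × C) ⊕ E.carrier →₀ ℂ) →ₗ[ℂ] G.carrier :=
    Finsupp.linearCombination ℂ g
  let β : ((E.carrier × B × C) ⊕ E.carrier →₀ ℂ) →ₗ[ℂ] F.carrier :=
    Finsupp.linearCombination ℂ f
  have hip : ∀ w w', F.ip (β w) (β w') = G.ip (α w) (α w') := by
    have hsingle : ∀ i w', F.ip (f i) (β w') = G.ip (g i) (α w') := by
      intro i w'
      induction w' using Finsupp.induction_linear with
      | zero => rw [map_zero, map_zero, F.ip_zero_right, G.ip_zero_right]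
      | add p q hp hq =>
          rw [map_add, map_add, F.inner_add_right, G.inner_add_right, hp, hq]
      | single j c =>
          show F.ip (f i) (Finsupp.linearCombination ℂ f (Finsupp.single j c)) = _
          rw [Finsupp.linearCombination_single, Finsupp.linearCombination_single,
            F.inner_smul_right, G.inner_smul_right, hgen]
    intro w w'
    induction w using Finsupp.induction_linear with
    | zero => rw [map_zero, map_zero, F.ip_zero_left, G.ip_zero_left]
    | add p q hp hq => rw [map_add, map_add, F.ip_add_left, G.ip_add_left, hp, hq]
    | single i c =>
        show F.ip (Finsupp.linearCombination ℂ f (Finsupp.single i c)) _ = _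
        rw [Finsupp.linearCombination_single, Finsupp.linearCombination_single,
          F.ip_smul_left, G.ip_smul_left, hsingle]
  have hnorm : ∀ w, ‖β w‖ = ‖α w‖ := by
    intro w
    rw [F.norm_eq, G.norm_eq, hip]
  -- the dense submodule
  let D' : Submodule ℂ G.carrier := Submodule.span ℂ (Set.range g)
  have hrange : LinearMap.range α = D' := Finsupp.range_linearCombination ℂ (v := g)
  -- continuity of the left action
  have hla_cont : ∀ b : B, Continuous (ℱ.la b) := by
    intro b
    let L : ℱ.carrier →ₗ[ℂ] ℱ.carrier :=
      { toFun := ℱ.la b, map_add' := ℱ.la_add b, map_smul' := fun c x => ℱ.la_smul b c x }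
    have hgraph : IsClosed (L.graph : Set (ℱ.carrier × ℱ.carrier)) := by
      have heq : (L.graph : Set (ℱ.carrier × ℱ.carrier)) =
          ⋂ w : ℱ.carrier, {p : ℱ.carrier × ℱ.carrier |
            ℱ.ip w p.2 = ℱ.ip (ℱ.la (star b) w) p.1} := by
        ext p
        simp only [SetLike.mem_coe, LinearMap.mem_graph_iff, Set.mem_iInter, Set.mem_setOf_eq]
        constructor
        · intro h w
          rw [h]
          exact ℱ.la_star b w p.1
        · intro h
          have hw := h (p.2 - ℱ.la b p.1)
          have h0 : ℱ.ip (p.2 - ℱ.la b p.1) (p.2 - ℱ.la b p.1) = 0 := by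
            rw [ℱ.toHilbertCStarModule.ip_sub_right, hw, ℱ.la_star, sub_self]
          have hd := ℱ.inner_definite _ h0
          exact sub_eq_zero.mp hd
      rw [heq]
      exact isClosed_iInter fun w => isClosed_eq
        ((ℱ.toHilbertCStarModule.cont_ip).comp (continuous_const.prodMk continuous_snd))
        ((ℱ.toHilbertCStarModule.cont_ip).comp (continuous_const.prodMk continuous_fst))
    have hc : Continuous L := LinearMap.continuous_of_isClosed_graph (g := L) hgraph
    exact hc
  -- t is complex-linear in the second variable
  have horthG : ∀ w : G.carrier, (∀ x' y', G.ip (t x' y') w = 0) → w = 0 := by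
    intro w h
    apply G.eq_zero_of_forall_ip_eq_zero httotal
    intro z hz
    refine Submodule.span_induction ?_ ?_ ?_ ?_ hz
    · rintro _ ⟨⟨x', y'⟩, rfl⟩
      exact h x' y'
    · exact G.ip_zero_left w
    · intro p q _ _ hp hq
      rw [G.ip_add_left, hp, hq, add_zero]
    · intro c z _ hz
      rw [G.ip_smul_left, hz, smul_zero]
  have htsmul : ∀ (x : E.carrier) (c : ℂ) (y : ℱ.carrier), t x (c • y) = c • t x y := by
    intro x c y
    have hw : ∀ x' y', G.ip (t x' y') (t x (c • y) - c • t x y) = 0 := by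
      intro x' y'
      rw [G.ip_sub_right, ht, G.inner_smul_right, ht, ℱ.la_smul, ℱ.inner_smul_right, sub_self]
    exact sub_eq_zero.mp (horthG _ hw)
  have ht0 : ∀ x : E.carrier, t x 0 = 0 := by
    intro x
    have h := htsmul x 0 0
    simpa using h
  -- continuity of t x ·
  have htcont : ∀ x : E.carrier, Continuous (fun y => t x y) := by
    intro x
    let L : ℱ.carrier →ₗ[ℂ] G.carrier :=
      { toFun := t x, map_add' := htadd₂ x, map_smul' := fun c y => htsmul x c y }
    let K : ℱ.carrier →ₗ[ℂ] ℱ.carrier :=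
      { toFun := ℱ.la (E.ip x x), map_add' := ℱ.la_add _,
        map_smul' := fun c y => ℱ.la_smul _ c y }
    have hKc : Continuous (⇑K) := hla_cont (E.ip x x)
    let Kc : ℱ.carrier →L[ℂ] ℱ.carrier := ⟨K, hKc⟩
    obtain ⟨Cb, hCbpos, hCb⟩ := Kc.bound
    have hbound : ∀ y, ‖t x y‖ ≤ Real.sqrt Cb * ‖y‖ := by
      intro y
      have h1 : ‖t x y‖ ^ 2 = ‖ℱ.ip y (ℱ.la (E.ip x x) y)‖ := by
        rw [← G.norm_sq, ht]
      have h2 : ‖ℱ.ip y (ℱ.la (E.ip x x) y)‖ ≤ ‖y‖ * (Cb * ‖y‖) :=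
        (ℱ.toHilbertCStarModule.cs y _).trans
          (mul_le_mul_of_nonneg_left (hCb y) (norm_nonneg y))
      have h3 : ‖t x y‖ ^ 2 ≤ (Real.sqrt Cb * ‖y‖) ^ 2 := by
        rw [mul_pow, Real.sq_sqrt hCbpos.le]
        calc ‖t x y‖ ^ 2 ≤ ‖y‖ * (Cb * ‖y‖) := h1 ▸ h2
          _ = Cb * ‖y‖ ^ 2 := by ring
      calc ‖t x y‖ = Real.sqrt (‖t x y‖ ^ 2) := (Real.sqrt_sq (norm_nonneg _)).symm
        _ ≤ Real.sqrt ((Real.sqrt Cb * ‖y‖) ^ 2) := Real.sqrt_le_sqrt h3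
        _ = Real.sqrt Cb * ‖y‖ := Real.sqrt_sq (by positivity)
    have hc : Continuous L := AddMonoidHomClass.continuous_of_bound L (Real.sqrt Cb) hbound
    exact hc
  -- continuity of scalar multiplication on G
  have hsmulcont : ∀ c : ℂ, Continuous (fun z : G.carrier => c • z) := by
    intro c
    let L : G.carrier →ₗ[ℂ] G.carrier :=
      { toFun := fun z => c • z, map_add' := smul_add c, map_smul' := fun a z => smul_comm c a z }
    have hc : Continuous L := AddMonoidHomClass.continuous_of_bound L ‖c‖ fun z =>
      le_of_eq (G.norm_smul' c z)
    exact hc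
  -- density of D'
  have hten : ∀ x y, t x y ∈ closure (D' : Set G.carrier) := by
    intro x y
    have hmapped : ∀ z ∈ Submodule.span ℂ
        {y : ℱ.carrier | ∃ (b : B) (c : C), y = ℱ.sm (ℱ.la b ζ) c}, t x z ∈ D' := by
      intro z hz
      refine Submodule.span_induction ?_ ?_ ?_ ?_ hz
      · rintro _ ⟨b, c, rfl⟩
        exact Submodule.subset_span ⟨Sum.inl (x, b, c), rfl⟩
      · rw [ht0]
        exact D'.zero_mem
      · intro p q _ _ hp hq
        rw [htadd₂]
        exact D'.add_mem hp hq
      · intro c z _ hz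
        rw [htsmul]
        exact D'.smul_mem c hz
    have hy : y ∈ closure ((Submodule.span ℂ
        {y : ℱ.carrier | ∃ (b : B) (c : C), y = ℱ.sm (ℱ.la b ζ) c} : Submodule ℂ ℱ.carrier) :
          Set ℱ.carrier) := by
      rw [hcyclic.closure_eq]
      trivial
    have h1 : t x y ∈ (fun z => t x z) '' closure ((Submodule.span ℂ
        {y : ℱ.carrier | ∃ (b : B) (c : C), y = ℱ.sm (ℱ.la b ζ) c} : Submodule ℂ ℱ.carrier) :
          Set ℱ.carrier) := ⟨y, hy, rfl⟩
    have h2 := image_closure_subset_closure_image (htcont x) h1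
    refine closure_mono ?_ h2
    rintro _ ⟨z, hz, rfl⟩
    exact hmapped z hz
  have hDdense : Dense (D' : Set G.carrier) := by
    rw [dense_iff_closure_eq]
    apply Set.eq_univ_of_univ_subset
    have h1 : ((Submodule.span ℂ
        (Set.range fun p : E.carrier × ℱ.carrier => t p.1 p.2) : Submodule ℂ G.carrier) :
          Set G.carrier) ⊆ closure (D' : Set G.carrier) := by
      intro z hz
      refine Submodule.span_induction ?_ ?_ ?_ ?_ hz
      · rintro _ ⟨⟨x, y⟩, rfl⟩
        exact hten x y
      · exact subset_closure D'.zero_mem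
      · intro p q _ _ hp hq
        exact map_mem_closure₂ continuous_add hp hq fun a ha b hb => D'.add_mem ha hb
      · intro c z _ hz
        exact map_mem_closure (hsmulcont c) hz fun a ha => D'.smul_mem c ha
    calc Set.univ
        = closure ((Submodule.span ℂ
            (Set.range fun p : E.carrier × ℱ.carrier => t p.1 p.2) : Submodule ℂ G.carrier) :
              Set G.carrier) := httotal.closure_eq.symm
      _ ⊆ closure (closure (D' : Set G.carrier)) := closure_mono h1
      _ = closure (D' : Set G.carrier) := closure_closure
  -- the isometry on D'
  have hrep : ∀ d : ↥D', ∃ w, α w = (d : G.carrier) := by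
    intro d
    obtain ⟨w, hw⟩ := Finsupp.mem_span_range_iff_exists_finsupp.mp d.2
    refine ⟨w, ?_⟩
    show Finsupp.linearCombination ℂ g w = _
    rw [Finsupp.linearCombination_apply]
    exact hw
  let u : ↥D' → ((E.carrier × B × C) ⊕ E.carrier →₀ ℂ) := fun d => (hrep d).choose
  have huα : ∀ d : ↥D', α (u d) = (d : G.carrier) := fun d => (hrep d).choose_spec
  let f₀ : ↥D' → F.carrier := fun d => β (u d)
  have hβα : ∀ w w', α w = α w' → β w = β w' := by
    intro w w' h
    have h0 : ‖β (w - w')‖ = 0 := by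
      rw [hnorm, map_sub, h, sub_self, norm_zero]
    rw [map_sub] at h0
    exact sub_eq_zero.mp (norm_eq_zero.mp h0)
  have hf₀add : ∀ d d' : ↥D', f₀ (d + d') = f₀ d + f₀ d' := by
    intro d d'
    have h1 : β (u (d + d')) = β (u d + u d') := by
      apply hβα
      rw [huα, map_add, huα, huα]
      rfl
    show β (u (d + d')) = β (u d) + β (u d')
    rw [h1, map_add]
  have hf₀ip : ∀ d d' : ↥D', F.ip (f₀ d) (f₀ d') = G.ip (d : G.carrier) (d' : G.carrier) := by
    intro d d'
    show F.ip (β (u d)) (β (u d')) = _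
    rw [hip, huα, huα]
  have hf₀iso : Isometry f₀ := by
    apply Isometry.of_dist_eq
    intro d d'
    rw [Subtype.dist_eq, dist_eq_norm, dist_eq_norm]
    have h1 : f₀ d - f₀ d' = β (u d - u d') := by
      show β (u d) - β (u d') = β (u d - u d')
      rw [map_sub]
    rw [h1, hnorm, map_sub, huα, huα]
  have huc : UniformContinuous f₀ := hf₀iso.uniformContinuous
  have he : IsUniformInducing (Subtype.val : ↥D' → G.carrier) :=
    isUniformEmbedding_subtype_val.isUniformInducing
  have hdr : DenseRange (Subtype.val : ↥D' → G.carrier) := by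
    show Dense (Set.range (Subtype.val : ↥D' → G.carrier))
    rw [Subtype.range_coe]
    exact hDdense
  let v : G.carrier → F.carrier := (he.isDenseInducing hdr).extend f₀
  have hve : ∀ d : ↥D', v (d : G.carrier) = f₀ d := fun d =>
    uniformly_extend_of_ind he hdr huc d
  have hvc : Continuous v := (uniformContinuous_uniformly_extend he hdr huc).continuous
  have hvg : ∀ i, v (g i) = f i := by
    intro i
    have hgi : g i ∈ D' := Submodule.subset_span ⟨i, rfl⟩
    have h1 := hve ⟨g i, hgi⟩
    rw [show ((⟨g i, hgi⟩ : ↥D') : G.carrier) = g i from rfl] at h1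
    rw [h1]
    show β (u ⟨g i, hgi⟩) = f i
    have h2 : β (u ⟨g i, hgi⟩) = β (Finsupp.single i 1) := by
      apply hβα
      rw [huα]
      show g i = Finsupp.linearCombination ℂ g (Finsupp.single i 1)
      rw [Finsupp.linearCombination_single, one_smul]
    rw [h2]
    show Finsupp.linearCombination ℂ f (Finsupp.single i 1) = f i
    rw [Finsupp.linearCombination_single, one_smul]
  refine ⟨v, ?_, ?_, ?_, ?_⟩
  · -- additivity
    have hEq : (fun pq : G.carrier × G.carrier => v (pq.1 + pq.2)) =
        fun pq => v pq.1 + v pq.2 := by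
      apply Continuous.ext_on (hDdense.prod hDdense)
      · exact hvc.comp (continuous_fst.add continuous_snd)
      · exact (hvc.comp continuous_fst).add (hvc.comp continuous_snd)
      · rintro ⟨p, q⟩ ⟨hp, hq⟩
        show v (p + q) = v p + v q
        have h1 := hve ⟨p, hp⟩
        have h2 := hve ⟨q, hq⟩
        have h3 := hve (⟨p, hp⟩ + ⟨q, hq⟩)
        rw [show (((⟨p, hp⟩ + ⟨q, hq⟩ : ↥D')) : G.carrier) = p + q from rfl] at h3
        rw [h3, h1, h2, hf₀add]
    intro p q
    exact congrFun hEq (p, q)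
  · -- isometry
    have hEq : (fun pq : G.carrier × G.carrier => F.ip (v pq.1) (v pq.2)) =
        fun pq => G.ip pq.1 pq.2 := by
      apply Continuous.ext_on (hDdense.prod hDdense)
      · exact (F.cont_ip).comp ((hvc.comp continuous_fst).prodMk (hvc.comp continuous_snd))
      · exact G.cont_ip
      · rintro ⟨p, q⟩ ⟨hp, hq⟩
        show F.ip (v p) (v q) = G.ip p q
        rw [hve ⟨p, hp⟩, hve ⟨q, hq⟩, hf₀ip]
    intro p q
    exact congrFun hEq (p, q)
  · intro x b c
    exact hvg (Sum.inl (x, b, c))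
  · intro x
    exact hvg (Sum.inr x)
end
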